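/- The uncountable Hadwiger conjecture number 𝔥𝔠 (the least size of an uncountably chromatic graph with no K_{ω₁} minor) has uncountable cofinality. More precisely: if κ is the supremum of a strictly increasing ω-sequence of cardinals (κ_n), and every graph of size κ_n either has a countable proper coloring or contains K_{ω₁} as a minor, then every graph of size κ either has a countable proper coloring or contains K_{ω₁} as a minor. -/

import Mathlib

universe u

open Cardinal

def Colorable' {V : Type u} (G : SimpleGraph V) (μ : Cardinal.{u}) : Prop :=
  ∃ (β : Type u) (c : V → β), #β ≤ μ ∧ ∀ ⦃x y : V⦄, G.Adj x y → c x ≠ c y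

def ChromaticEq {V : Type u} (G : SimpleGraph V) (μ : Cardinal.{u}) : Prop :=
  Colorable' G μ ∧ ∀ ν : Cardinal.{u}, ν < μ → ¬ Colorable' G ν

def HasCompleteMinor {V : Type u} (G : SimpleGraph V) (κ : Cardinal.{u}) : Prop :=
  ∃ (ι : Type u) (U : ι → Set V), #ι = κ ∧
    (∀ i, (U i).Nonempty) ∧
    (∀ i j, i ≠ j → Disjoint (U i) (U j)) ∧
    (∀ i, (G.induce (U i)).Connected) ∧
    (∀ i j, i ≠ j → ∃ x ∈ U i, ∃ y ∈ U j, G.Adj x y)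

def IsSetTree (T : Type u) [PartialOrder T] : Prop :=
  ∀ t : T, IsWellOrder {s : T // s < t} (· < ·)

def compGraph (T : Type u) [PartialOrder T] : SimpleGraph T :=
  SimpleGraph.fromRel (· ≤ ·)

def IsSpecialTree (T : Type u) [PartialOrder T] (κ : Cardinal.{u}) : Prop :=
  ∃ (β : Type u) (f : T → β), #β ≤ κ ∧ ∀ ⦃s t : T⦄, s < t → f s ≠ f t

def HasChainOfSize (T : Type u) [PartialOrder T] (κ : Cardinal.{u}) : Prop :=
  ∃ C : Set T, IsChain (· ≤ ·) C ∧ #C = κ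

def HasAntichainOfSize (T : Type u) [PartialOrder T] (κ : Cardinal.{u}) : Prop :=
  ∃ A : Set T, IsAntichain (· ≤ ·) A ∧ #A = κ

def HasIndepOfSize {V : Type u} (G : SimpleGraph V) (κ : Cardinal.{u}) : Prop :=
  ∃ S : Set V, #S = κ ∧ ∀ x ∈ S, ∀ y ∈ S, ¬ G.Adj x y

def AllChainsCountable (T : Type u) [PartialOrder T] : Prop :=
  ∀ C : Set T, IsChain (· ≤ ·) C → #C ≤ ℵ₀

noncomputable def nodeHeight {T : Type u} [PartialOrder T] (hT : IsSetTree T) (t : T) : Ordinal.{u} :=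
  @Ordinal.type {s : T // s < t} (· < ·) (hT t)

def KappaLambdaConnected {V : Type u} (G : SimpleGraph V) (κ μ : Cardinal.{u}) : Prop :=
  ∀ S : Set V, #S < κ → (Sᶜ : Set V).Nonempty ∧ #((G.induce (Sᶜ : Set V)).ConnectedComponent) < μ

def KappaConnected {V : Type u} (G : SimpleGraph V) (κ : Cardinal.{u}) : Prop :=
  κ ≤ #V ∧ ∀ S : Set V, #S < κ → (G.induce (Sᶜ : Set V)).Connected

def ContainsSubdivisionOfComplete {V : Type u} (G : SimpleGraph V) (κ : Cardinal.{u}) : Prop :=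
  ∃ (ι : Type u) (v : ι → V), #ι = κ ∧ Function.Injective v ∧
    ∃ p : ∀ i j : ι, G.Walk (v i) (v j),
      (∀ i j, i ≠ j → (p i j).IsPath) ∧
      (∀ i j k l, i ≠ j → k ≠ l → (i, j) ≠ (k, l) → (i, j) ≠ (l, k) →
        ∀ x, x ∈ (p i j).support → x ∈ (p k l).support → x ∈ Set.range v) ∧
      (∀ i j k, i ≠ j → v k ∈ (p i j).support → k = i ∨ k = j)

def IsTGraph {T : Type u} [PartialOrder T] (G : SimpleGraph T) : Prop :=
  (∀ ⦃s t⦄, G.Adj s t → s < t ∨ t < s) ∧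
  (∀ t s : T, s < t → ∃ r, s ≤ r ∧ r < t ∧ G.Adj r t)

noncomputable def induceInduceIso {V : Type u} (G : SimpleGraph V) (S : Set V) (U : Set S) :
    ((G.induce S).induce U) ≃g (G.induce (Subtype.val '' U)) where
  toEquiv := Equiv.Set.image Subtype.val U Subtype.val_injective
  map_rel_iff' := by
    intro a b
    simp [Equiv.Set.image, Equiv.Set.imageOfInjOn]

def fstFiberEquiv {ι : Type u} (W : ι → Type u) (n : ι) :
    {p : Σ i, W i // p.1 = n} ≃ W n where
  toFun p := p.2 ▸ p.1.2
  invFun w := ⟨⟨n, w⟩, rfl⟩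
  left_inv := fun ⟨⟨i, w⟩, h⟩ => by subst h; rfl
  right_inv := fun w => rfl

lemma minor_lift {V : Type u} (G : SimpleGraph V) (S : Set V) (μ : Cardinal.{u})
    (h : HasCompleteMinor (G.induce S) μ) : HasCompleteMinor G μ := by
  obtain ⟨ι, U, hι, hne, hdisj, hconn, hadj⟩ := h
  refine ⟨ι, fun i => Subtype.val '' U i, hι, fun i => (hne i).image _, ?_, ?_, ?_⟩
  · intro i j hij
    exact Set.disjoint_image_of_injective Subtype.val_injective (hdisj i j hij)
  · intro i
    exact (induceInduceIso G S (U i)).connected_iff.mp (hconn i)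
  · intro i j hij
    obtain ⟨x, hx, y, hy, hxy⟩ := hadj i j hij
    exact ⟨x.1, Set.mem_image_of_mem _ hx, y.1, Set.mem_image_of_mem _ hy, hxy⟩

/-- the Hadwiger number has uncountable cofinality. -/
theorem stmt7 (κ : Cardinal.{u}) (ks : ℕ → Cardinal.{u})
    (hmono : StrictMono ks)
    (hsup : κ = ⨆ n, ks n)
    (hstep : ∀ n, ∀ (V : Type u) (G : SimpleGraph V), #V = ks n →
      Colorable' G ℵ₀ ∨ HasCompleteMinor G (Cardinal.aleph 1)) :
    ∀ (V : Type u) (G : SimpleGraph V), #V = κ →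
      Colorable' G ℵ₀ ∨ HasCompleteMinor G (Cardinal.aleph 1) := by
  intro V G hV
  -- each ks n ≤ κ
  have hksle : ∀ n, ks n ≤ κ := by
    intro n; rw [hsup]; exact le_ciSup (Cardinal.bddAbove_range _) n
  -- n ≤ ks n
  have hnle : ∀ n : ℕ, (n : Cardinal.{u}) ≤ ks n := by
    intro n
    induction n with
    | zero => exact zero_le
    | succ n ih =>
      have h1 : (n : Cardinal.{u}) < ks (n + 1) := lt_of_le_of_lt ih (hmono (Nat.lt_succ_self n))
      rw [Cardinal.nat_succ]
      exact Order.succ_le_of_lt h1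
  have hκω : ℵ₀ ≤ κ := by
    rw [Cardinal.aleph0_le]
    exact fun n => (hnle n).trans (hksle n)
  -- sum of the ks equals κ
  have hsum : Cardinal.sum (fun n : ULift.{u} ℕ => ks n.down) = κ := by
    apply le_antisymm
    · calc Cardinal.sum (fun n : ULift.{u} ℕ => ks n.down)
          ≤ Cardinal.sum (fun _ : ULift.{u} ℕ => κ) :=
            Cardinal.sum_le_sum _ _ fun n => hksle n.down
      _ = #(ULift.{u} ℕ) * κ := Cardinal.sum_const' _ _
      _ = ℵ₀ * κ := by rw [Cardinal.mk_uLift, Cardinal.mk_nat, Cardinal.lift_aleph0]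
      _ = κ := by
            rw [Cardinal.mul_eq_max le_rfl hκω, max_eq_right hκω]
    · rw [hsup]
      exact ciSup_le fun n => Cardinal.le_sum (fun n : ULift.{u} ℕ => ks n.down) ⟨n⟩
  -- decompose V
  have hVeq : #V = #(Σ n : ULift.{u} ℕ, Quotient.out (ks n.down)) := by
    rw [Cardinal.mk_sigma]
    simp only [Cardinal.mk_out]
    rw [hV, hsum]
  obtain ⟨e⟩ := Cardinal.eq.mp hVeq
  set f : V → ULift.{u} ℕ := fun v => (e v).1 with hf
  set S : ULift.{u} ℕ → Set V := fun n => {v | f v = n} with hS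
  have hScard : ∀ n, #(S n) = ks n.down := by
    intro n
    have e1 : ↥(S n) ≃ {p : Σ m : ULift.{u} ℕ, Quotient.out (ks m.down) // p.1 = n} :=
      e.subtypeEquiv fun v => Iff.rfl
    have e2 := fstFiberEquiv (fun m : ULift.{u} ℕ => Quotient.out (ks m.down)) n
    rw [Cardinal.mk_congr (e1.trans e2), Cardinal.mk_out]
  by_cases hm : ∃ n, HasCompleteMinor (G.induce (S n)) (Cardinal.aleph 1)
  · obtain ⟨n, hmn⟩ := hm
    exact Or.inr (minor_lift G (S n) _ hmn)
  · push_neg at hm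
    -- every piece is countably colorable
    have hcol : ∀ n, Colorable' (G.induce (S n)) ℵ₀ := by
      intro n
      rcases hstep n.down (↥(S n)) (G.induce (S n)) (hScard n) with h | h
      · exact h
      · exact absurd h (hm n)
    choose β cs hβ hcs using hcol
    refine Or.inl ⟨Σ n : ULift.{u} ℕ, β n, fun v => ⟨f v, cs (f v) ⟨v, rfl⟩⟩, ?_, ?_⟩
    · calc #(Σ n : ULift.{u} ℕ, β n) = Cardinal.sum (fun n => #(β n)) := Cardinal.mk_sigma _
        _ ≤ Cardinal.sum (fun _ : ULift.{u} ℕ => ℵ₀) := Cardinal.sum_le_sum _ _ hβ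
        _ = #(ULift.{u} ℕ) * ℵ₀ := Cardinal.sum_const' _ _
        _ = ℵ₀ := by rw [Cardinal.mk_uLift, Cardinal.mk_nat, Cardinal.lift_aleph0, Cardinal.aleph0_mul_aleph0]
    · intro x y hxy h
      dsimp only at h
      have key : ∀ (v : V) (n : ULift.{u} ℕ) (hv : f v = n),
          (⟨f v, cs (f v) ⟨v, rfl⟩⟩ : Σ n, β n) = ⟨n, cs n ⟨v, hv⟩⟩ := by
        rintro v n rfl; rfl
      rcases eq_or_ne (f x) (f y) with hfe | hfn
      · rw [key x (f y) hfe, key y (f y) rfl] at h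
        have h2 := eq_of_heq (Sigma.ext_iff.mp h).2
        have hadj' : (G.induce (S (f y))).Adj ⟨x, hfe⟩ ⟨y, rfl⟩ := hxy
        exact hcs (f y) hadj' h2
      · exact hfn (Sigma.ext_iff.mp h).1
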